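/- For a chain a of degree at least n in an augmented directed complex with basis, the part of a in degrees ≤ n−1 coincides with the meet of its source and target: r_{n-1}(a) = d⁻_{n-1}(a) ∧ d⁺_{n-1}(a). -/
import Mathlib


/-! Chains in an augmented directed complex with basis.  An augmented directed complex
with basis `B` is encoded by a degree function `deg : B → ℕ`, a differential given on
basis elements `diff : B → (B →₀ ℤ)` and an augmentation `aug : B → ℤ` on the basis
(the predicate `IsADC` expresses the chain-complex and augmentation axioms).
A *chain* is a finitely supported function `B → ℕ`, i.e. a nonnegative combination of
basis elements. -/

namespace Chains

/-- Positive part of an integral combination, as a chain. -/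
noncomputable def posPart {B : Type*} (x : B →₀ ℤ) : B →₀ ℕ :=
  x.mapRange Int.toNat (by simp)

/-- Negative part of an integral combination, as a chain. -/
noncomputable def negPart {B : Type*} (x : B →₀ ℤ) : B →₀ ℕ :=
  x.mapRange (fun k => (-k).toNat) (by simp)

/-- Inclusion of chains into integral combinations. -/
noncomputable def toInt {B : Type*} (a : B →₀ ℕ) : B →₀ ℤ :=
  a.mapRange (Nat.cast : ℕ → ℤ) (by simp)

/-- Pointwise minimum (`∧`) of chains. -/
noncomputable def cmin {B : Type*} [DecidableEq B] (a a' : B →₀ ℕ) : B →₀ ℕ :=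
  Finsupp.zipWith min (by simp) a a'

/-- Pointwise maximum (`∨`) of chains. -/
noncomputable def cmax {B : Type*} [DecidableEq B] (a a' : B →₀ ℕ) : B →₀ ℕ :=
  Finsupp.zipWith max (by simp) a a'

/-- Truncated subtraction (`∖`) of chains. -/
noncomputable def csub {B : Type*} [DecidableEq B] (a a' : B →₀ ℕ) : B →₀ ℕ :=
  Finsupp.zipWith (fun m n => m - n) (by simp) a a'

/-- The differential extended to chains. -/
noncomputable def bdry {B : Type*} (diff : B → B →₀ ℤ) (a : B →₀ ℕ) : B →₀ ℤ :=
  a.sum fun b k => (k : ℤ) • diff b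

/-- The positive (`α = true`) and negative (`α = false`) part of the differential. -/
noncomputable def bdryP {B : Type*} (diff : B → B →₀ ℤ) (α : Bool) (a : B →₀ ℕ) :
    B →₀ ℕ :=
  if α then posPart (bdry diff a) else negPart (bdry diff a)

open Classical in
/-- The degree-`k` homogeneous part `(a)ₖ` of a chain. -/
noncomputable def homog {B : Type*} (deg : B → ℕ) (k : ℕ) (a : B →₀ ℕ) : B →₀ ℕ :=
  a.filter fun b => deg b = k

open Classical in
/-- The `k`-rest `rₖ(a)`: the part of a chain in degrees `≤ k`. -/
noncomputable def trunc {B : Type*} (deg : B → ℕ) (k : ℕ) (a : B →₀ ℕ) : B →₀ ℕ :=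
  a.filter fun b => deg b ≤ k

/-- One step of the source/target operator: `∂^α((a)_{n+1}) + rₙ(a)`. -/
noncomputable def dstep {B : Type*} [DecidableEq B] (deg : B → ℕ) (diff : B → B →₀ ℤ)
    (α : Bool) (n : ℕ) (a : B →₀ ℕ) : B →₀ ℕ :=
  bdryP diff α (homog deg (n + 1) a) + trunc deg n a

/-- Auxiliary downward recursion for the source/target operators. -/
noncomputable def dmapAux {B : Type*} [DecidableEq B] (deg : B → ℕ) (diff : B → B →₀ ℤ)
    (α : Bool) : ℕ → ℕ → (B →₀ ℕ) → (B →₀ ℕ)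
  | _, 0, a => a
  | n, k + 1, a => dstep deg diff α n (dmapAux deg diff α (n + 1) k a)

/-- Degree of a chain (0 for the zero chain). -/
def degC {B : Type*} (deg : B → ℕ) (a : B →₀ ℕ) : ℕ := a.support.sup deg

/-- The source (`α = false`) and target (`α = true`) operators `d^α_n` on chains:
`d^α_n a = a` if `|a| ≤ n`, and otherwise
`d^α_n a = ∂^α((d^α_{n+1}a)_{n+1}) + rₙ(d^α_{n+1}a)`. -/
noncomputable def dmap {B : Type*} [DecidableEq B] (deg : B → ℕ) (diff : B → B →₀ ℤ)
    (α : Bool) (n : ℕ) (a : B →₀ ℕ) : B →₀ ℕ :=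
  dmapAux deg diff α n (degC deg a - n) a

/-- The augmentation evaluated on a chain. -/
noncomputable def augC {B : Type*} (aug : B → ℤ) (a : B →₀ ℕ) : ℤ :=
  a.sum fun b k => (k : ℤ) * aug b

/-- `e(a) := e(d⁺₀ a)`. -/
noncomputable def eC {B : Type*} [DecidableEq B] (deg : B → ℕ) (diff : B → B →₀ ℤ)
    (aug : B → ℤ) (a : B →₀ ℕ) : ℤ :=
  augC aug (dmap deg diff true 0 a)

/-- A chain is coherent when `e(a) = 1`. -/
def Coherent {B : Type*} [DecidableEq B] (deg : B → ℕ) (diff : B → B →₀ ℤ)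
    (aug : B → ℤ) (a : B →₀ ℕ) : Prop :=
  eC deg diff aug a = 1

/-- The axioms of an augmented directed complex (with basis): the differential decreases
degree by one, vanishes in degree 0, squares to zero, and is annihilated by the
augmentation. -/
structure IsADC {B : Type*} (deg : B → ℕ) (diff : B → B →₀ ℤ) (aug : B → ℤ) : Prop where
  diff_deg : ∀ b b', b' ∈ (diff b).support → deg b' + 1 = deg b
  diff_zero : ∀ b, deg b = 0 → diff b = 0
  diff_sq : ∀ b, ((diff b).sum fun b' k => k • diff b') = 0
  aug_diff : ∀ b, deg b = 1 → ((diff b).sum fun b' k => k * aug b') = 0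

/-- The basis is unitary when the table `⟨b⟩` of every basis element is coherent,
i.e. `e(d^α₀⟨b⟩) = 1` for both `α`. -/
def Unitary {B : Type*} [DecidableEq B] (deg : B → ℕ) (diff : B → B →₀ ℤ)
    (aug : B → ℤ) : Prop :=
  ∀ (b : B) (α : Bool), augC aug (dmap deg diff α 0 (Finsupp.single b 1)) = 1

/-- The elementary relation `x ⊙ₙ y` on basis elements of degree `≥ n`:
`⟨x⟩ₙ⁻ ∧ ⟨y⟩ₙ⁺ ≠ 0`. -/
def relO {B : Type*} [DecidableEq B] (deg : B → ℕ) (diff : B → B →₀ ℤ)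
    (n : ℕ) (x y : B) : Prop :=
  n ≤ deg x ∧ n ≤ deg y ∧
    ¬ Disjoint (dmap deg diff false n (Finsupp.single x 1)).support
        (dmap deg diff true n (Finsupp.single y 1)).support

/-- The basis is loop-free when for every `n` the reflexive-transitive closure of `⊙ₙ`
is a partial order (i.e. is antisymmetric). -/
def LoopFree {B : Type*} [DecidableEq B] (deg : B → ℕ) (diff : B → B →₀ ℤ) : Prop :=
  ∀ (n : ℕ) (x y : B), Relation.ReflTransGen (relO deg diff n) x y →
    Relation.ReflTransGen (relO deg diff n) y x → x = y

/-- The composition degree `|a|_c` of a chain, an element of `ℤ` (with value `-1` when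
the defining set is empty): `sup{ n | ∃ b ≠ b' ∈ supp a, |b| ≥ |b'| > n }`. -/
noncomputable def compDeg {B : Type*} (deg : B → ℕ) (a : B →₀ ℕ) : ℤ :=
  sSup (insert (-1) {n : ℤ | ∃ b ∈ a.support, ∃ b' ∈ a.support,
    b ≠ b' ∧ (deg b' : ℤ) ≤ (deg b : ℤ) ∧ n < (deg b' : ℤ)})

/-- The `n`-composition of chains: `x *ₙ y := (x - d⁻ₙ(x) + y)₊`. -/
noncomputable def compC {B : Type*} [DecidableEq B] (deg : B → ℕ) (diff : B → B →₀ ℤ)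
    (n : ℕ) (x y : B →₀ ℕ) : B →₀ ℕ :=
  posPart (toInt x - toInt (dmap deg diff false n x) + toInt y)

/-- Iterated `n`-composition of a list of chains (associating to the right). -/
noncomputable def compList {B : Type*} [DecidableEq B] (deg : B → ℕ)
    (diff : B → B →₀ ℤ) (n : ℕ) : List (B →₀ ℕ) → (B →₀ ℕ)
  | [] => 0
  | [x] => x
  | x :: y :: l => compC deg diff n x (compList deg diff n (y :: l))

set_option linter.unusedSectionVars false

-- auxiliary lemmas
variable {B : Type*} [DecidableEq B] {deg : B → ℕ} {diff : B → B →₀ ℤ}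

lemma toInt_apply (a : B →₀ ℕ) (b : B) : toInt a b = (a b : ℤ) := rfl
lemma posPart_apply (x : B →₀ ℤ) (b : B) : posPart x b = (x b).toNat := rfl
lemma negPart_apply (x : B →₀ ℤ) (b : B) : negPart x b = (-(x b)).toNat := rfl
lemma cmin_apply (a a' : B →₀ ℕ) (b : B) : cmin a a' b = min (a b) (a' b) := rfl

lemma trunc_apply_le {k : ℕ} {b : B} (h : deg b ≤ k) (a : B →₀ ℕ) :
    trunc deg k a b = a b := Finsupp.filter_apply_pos _ _ h
lemma trunc_apply_gt {k : ℕ} {b : B} (h : ¬ deg b ≤ k) (a : B →₀ ℕ) :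
    trunc deg k a b = 0 := Finsupp.filter_apply_neg _ _ h
lemma homog_apply_eq {k : ℕ} {b : B} (h : deg b = k) (a : B →₀ ℕ) :
    homog deg k a b = a b := Finsupp.filter_apply_pos _ _ h
lemma homog_apply_ne {k : ℕ} {b : B} (h : ¬ deg b = k) (a : B →₀ ℕ) :
    homog deg k a b = 0 := Finsupp.filter_apply_neg _ _ h

noncomputable def bdryZ (diff : B → B →₀ ℤ) : (B →₀ ℤ) →ₗ[ℤ] (B →₀ ℤ) :=
  Finsupp.linearCombination ℤ diff

lemma bdry_eq_bdryZ (a : B →₀ ℕ) : bdry diff a = bdryZ diff (toInt a) := by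
  rw [bdry, bdryZ, Finsupp.linearCombination_apply, toInt, Finsupp.sum_mapRange_index]
  simp

lemma bdryZ_sq (hsq : ∀ b, ((diff b).sum fun b' k => k • diff b') = 0) (x : B →₀ ℤ) :
    bdryZ diff (bdryZ diff x) = 0 := by
  have hx : bdryZ diff x = x.sum fun b k => k • diff b :=
    Finsupp.linearCombination_apply _ _
  rw [hx, map_finsuppSum]
  rw [Finsupp.sum]
  refine Finset.sum_eq_zero fun b _ => ?_
  rw [map_smul, show bdryZ diff (diff b) = ((diff b).sum fun b' k => k • diff b') from
    Finsupp.linearCombination_apply _ _, hsq b, smul_zero]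

lemma support_bdryZ {x : B →₀ ℤ} {b' : B} (h : b' ∈ (bdryZ diff x).support) :
    ∃ b ∈ x.support, b' ∈ (diff b).support := by
  rw [bdryZ, Finsupp.linearCombination_apply] at h
  obtain ⟨b, hb, hb'⟩ := Finset.mem_biUnion.mp (Finsupp.support_sum h)
  exact ⟨b, hb, Finsupp.support_smul hb'⟩

lemma bdry_homog_apply_eq_zero
    (hd : ∀ b b', b' ∈ (diff b).support → deg b' + 1 = deg b)
    (c : B →₀ ℕ) (m : ℕ) {x : B} (hx : deg x ≠ m) :
    bdry diff (homog deg (m + 1) c) x = 0 := by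
  by_contra h
  have hmem : x ∈ (bdry diff (homog deg (m + 1) c)).support := Finsupp.mem_support_iff.mpr h
  rw [bdry_eq_bdryZ] at hmem
  obtain ⟨b, hb, hx'⟩ := support_bdryZ hmem
  have hbs : b ∈ (homog deg (m + 1) c).support := by
    have := Finsupp.mem_support_iff.mp hb
    rw [toInt_apply] at this
    exact Finsupp.mem_support_iff.mpr (by exact_mod_cast this)
  have hbdeg : deg b = m + 1 := by
    by_contra hne
    exact (Finsupp.mem_support_iff.mp hbs) (homog_apply_ne hne c ▸ rfl)
  have := hd b x hx'
  omega

lemma homog_eq_zero_of_lt (a : B →₀ ℕ) {k : ℕ} (h : degC deg a < k) :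
    homog deg k a = 0 := by
  ext b
  simp only [Finsupp.coe_zero, Pi.zero_apply]
  by_cases hb : deg b = k
  · rw [homog_apply_eq hb]
    by_contra hab
    have hs : b ∈ a.support := Finsupp.mem_support_iff.mpr hab
    have : deg b ≤ degC deg a := Finset.le_sup hs
    omega
  · rw [homog_apply_ne hb]

lemma bdry_zero : bdry diff (0 : B →₀ ℕ) = 0 := by simp [bdry]

lemma dmap_eq_self {α : Bool} {k : ℕ} {a : B →₀ ℕ} (h : degC deg a ≤ k) :
    dmap deg diff α k a = a := by
  rw [dmap, Nat.sub_eq_zero_of_le h]; rfl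

lemma dmap_succ {α : Bool} {k : ℕ} {a : B →₀ ℕ} (h : k < degC deg a) :
    dmap deg diff α k a = dstep deg diff α k (dmap deg diff α (k + 1) a) := by
  rw [dmap, dmap, show degC deg a - k = (degC deg a - (k + 1)) + 1 by omega]
  rfl


lemma trunc_dmapAux (hd : ∀ b b', b' ∈ (diff b).support → deg b' + 1 = deg b)
    {α : Bool} {j : ℕ} :
    ∀ (k m : ℕ) (a : B →₀ ℕ), j < m →
      trunc deg j (dmapAux deg diff α m k a) = trunc deg j a := by
  intro k
  induction k with
  | zero => intro m a _; rfl
  | succ k ih =>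
    intro m a hm
    show trunc deg j (dstep deg diff α m (dmapAux deg diff α (m + 1) k a)) = trunc deg j a
    set b := dmapAux deg diff α (m + 1) k a with hbdef
    have hb : trunc deg j b = trunc deg j a := ih (m + 1) a (by omega)
    ext x
    by_cases hx : deg x ≤ j
    · rw [trunc_apply_le hx, trunc_apply_le hx]
      have h1 : bdry diff (homog deg (m + 1) b) x = 0 :=
        bdry_homog_apply_eq_zero hd b m (by omega)
      have h2 : bdryP diff α (homog deg (m + 1) b) x = 0 := by
        cases α <;> simp [bdryP, negPart_apply, posPart_apply, h1]
      have h3 : trunc deg m b x = b x := trunc_apply_le (by omega) b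
      have h4 : b x = a x := by
        have := congrArg (fun f : B →₀ ℕ => f x) hb
        simpa [trunc_apply_le hx] using this
      simp only [dstep, Finsupp.add_apply, h2, h3, zero_add, h4]
    · rw [trunc_apply_gt hx, trunc_apply_gt hx]

lemma key (hd : ∀ b b', b' ∈ (diff b).support → deg b' + 1 = deg b)
    (hsq : ∀ b, ((diff b).sum fun b' k => k • diff b') = 0) (a : B →₀ ℕ) (k : ℕ) :
    bdry diff (homog deg (k + 1) (dmap deg diff true (k + 1) a)) =
      bdry diff (homog deg (k + 1) (dmap deg diff false (k + 1) a)) ∧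
    toInt (dmap deg diff true k a) - toInt (dmap deg diff false k a) =
      bdry diff (homog deg (k + 1) (dmap deg diff true (k + 1) a)) := by
  suffices h : ∀ (m k : ℕ), degC deg a - k = m →
      (bdry diff (homog deg (k + 1) (dmap deg diff true (k + 1) a)) =
        bdry diff (homog deg (k + 1) (dmap deg diff false (k + 1) a)) ∧
      toInt (dmap deg diff true k a) - toInt (dmap deg diff false k a) =
        bdry diff (homog deg (k + 1) (dmap deg diff true (k + 1) a))) by
    exact h _ k rfl
  intro m
  induction m with
  | zero =>
    intro k hk
    have hk' : degC deg a ≤ k := by omega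
    rw [dmap_eq_self hk', dmap_eq_self (α := true) (by omega : degC deg a ≤ k + 1),
      dmap_eq_self (α := false) (by omega : degC deg a ≤ k + 1),
      dmap_eq_self (α := false) hk', homog_eq_zero_of_lt a (by omega), bdry_zero]
    exact ⟨rfl, sub_self _⟩
  | succ m ih =>
    intro k hk
    have hklt : k < degC deg a := by omega
    obtain ⟨ih1, ih2⟩ := ih (k + 1) (by omega)
    set P := dmap deg diff true (k + 1) a with hP
    set Q := dmap deg diff false (k + 1) a with hQ
    set c := homog deg (k + 1 + 1) (dmap deg diff true (k + 1 + 1) a) with hc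
    have hbc : ∀ x : B, deg x ≠ k + 1 → bdry diff c x = 0 := fun x hx =>
      bdry_homog_apply_eq_zero hd _ (k + 1) hx
    have hA : toInt (homog deg (k + 1) P) - toInt (homog deg (k + 1) Q) = bdry diff c := by
      ext x
      have h2 := congrArg (fun f : B →₀ ℤ => f x) ih2
      simp only [Finsupp.sub_apply, toInt_apply] at h2 ⊢
      by_cases hx : deg x = k + 1
      · rw [homog_apply_eq hx, homog_apply_eq hx]; exact h2
      · rw [homog_apply_ne hx, homog_apply_ne hx, hbc x hx]; simp
    have hB : bdry diff (homog deg (k + 1) P) = bdry diff (homog deg (k + 1) Q) := by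
      have h0 : bdryZ diff (bdry diff c) = 0 := by
        rw [bdry_eq_bdryZ]; exact bdryZ_sq hsq _
      rw [bdry_eq_bdryZ, bdry_eq_bdryZ]
      have h1 := congrArg (fun y => bdryZ diff y) hA
      simp only [map_sub] at h1
      rw [h0] at h1
      exact sub_eq_zero.mp h1
    refine ⟨hB, ?_⟩
    rw [dmap_succ hklt, dmap_succ hklt, ← hP, ← hQ]
    ext x
    have hw : bdry diff (homog deg (k + 1) P) x = bdry diff (homog deg (k + 1) Q) x :=
      congrArg (fun f : B →₀ ℤ => f x) hB
    have htr : (trunc deg k P x : ℤ) = trunc deg k Q x := by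
      by_cases hx : deg x ≤ k
      · rw [trunc_apply_le hx, trunc_apply_le hx]
        have h2 := congrArg (fun f : B →₀ ℤ => f x) ih2
        simp only [Finsupp.sub_apply, toInt_apply] at h2
        rw [hbc x (by omega)] at h2
        omega
      · rw [trunc_apply_gt hx, trunc_apply_gt hx]
    simp only [dstep, bdryP, if_true, Bool.false_eq_true, if_false, Finsupp.sub_apply,
      Finsupp.add_apply, toInt_apply, posPart_apply, negPart_apply]
    push_cast
    omega

end Chains

open Chains in
/-- For a chain `a` of degree at least `n ≥ 1` in an augmented directed complex with
basis, the part of `a` in degrees `≤ n-1` is the meet of its source and target: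
`r_{n-1}(a) = d⁻_{n-1}(a) ∧ d⁺_{n-1}(a)`. -/
theorem trunc_eq_cmin_dmap {B : Type*} [DecidableEq B]
    (deg : B → ℕ) (diff : B → B →₀ ℤ) (aug : B → ℤ) (hADC : IsADC deg diff aug)
    (a : B →₀ ℕ) (n : ℕ) (hn1 : 1 ≤ n) (hn : n ≤ degC deg a) :
    trunc deg (n - 1) a =
      cmin (dmap deg diff false (n - 1) a) (dmap deg diff true (n - 1) a) := by
  have hd := hADC.diff_deg
  have hn' : n - 1 + 1 = n := by omega
  obtain ⟨h1, -⟩ := key hd hADC.diff_sq a (n - 1)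
  rw [hn'] at h1
  have e : ∀ α : Bool, dmap deg diff α (n - 1) a =
      dstep deg diff α (n - 1) (dmap deg diff α n a) := by
    intro α
    rw [dmap_succ (by omega), hn']
  have ht : ∀ α : Bool, trunc deg (n - 1) (dmap deg diff α n a) = trunc deg (n - 1) a := by
    intro α
    rw [dmap]
    exact trunc_dmapAux hd _ n a (by omega)
  ext x
  rw [cmin_apply, e false, e true]
  simp only [dstep, bdryP, if_true, Bool.false_eq_true, if_false, Finsupp.add_apply,
    posPart_apply, negPart_apply, hn', ht false, ht true]
  have hwx : bdry diff (homog deg n (dmap deg diff false n a)) x =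
      bdry diff (homog deg n (dmap deg diff true n a)) x :=
    (congrArg (fun f : B →₀ ℤ => f x) h1).symm
  omega
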